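/- Let d ≥ 2 and let F ⊆ ℝ^{d-1} be a compact convex set with (d-1)-dimensional Lebesgue measure 1. For every α > 0 there exists a compact convex set K ⊆ ℝ^d with floor F and Vol_d(K) = 1 such that Q_K(2) ≥ 1 − α. -/

import Mathlib

open MeasureTheory Set Pointwise

noncomputable section

/-- The floor `F ⊆ ℝ^m` embedded into `ℝ^{m+1}` at height `0`, i.e. `F × {0}`. -/
def floorEmb (m : ℕ) (F : Set (Fin m → ℝ)) : Set (Fin (m + 1) → ℝ) :=
  (fun z => Fin.snoc z (0 : ℝ)) '' F

/-- `K ⊆ ℝ^{m+1}` has floor `F ⊆ ℝ^m`: it lies in the upper half-space and its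
intersection with the hyperplane `x_{last} = 0` is `F × {0}`. -/
def HasFloor (m : ℕ) (F : Set (Fin m → ℝ)) (K : Set (Fin (m + 1) → ℝ)) : Prop :=
  K ⊆ {x | 0 ≤ x (Fin.last m)} ∧ K ∩ {x | x (Fin.last m) = 0} = floorEmb m F

/-- `Q_K(2)`: the probability that two independent uniform points `U₁, U₂` of `K`
both lie on the boundary of the convex hull of `{U₁, U₂} ∪ (F × {0})`. -/
def Qtwo (m : ℕ) (F : Set (Fin m → ℝ)) (K : Set (Fin (m + 1) → ℝ)) : ℝ :=
  (((volume.restrict K).prod (volume.restrict K))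
    {p : (Fin (m + 1) → ℝ) × (Fin (m + 1) → ℝ) |
      p.1 ∈ frontier (convexHull ℝ ({p.1, p.2} ∪ floorEmb m F)) ∧
      p.2 ∈ frontier (convexHull ℝ ({p.1, p.2} ∪ floorEmb m F))}).toReal

/-- `L_K(t)`: the `m`-dimensional Lebesgue measure of the horizontal slice of `K`
at height `t`. -/
def layerVol (m : ℕ) (K : Set (Fin (m + 1) → ℝ)) (t : ℝ) : ℝ :=
  (volume {z : Fin m → ℝ | Fin.snoc z t ∈ K}).toReal

variable {m : ℕ}

lemma snoc_comb (a b : ℝ) (z z' : Fin m → ℝ) (t t' : ℝ) :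
    a • (Fin.snoc z t : Fin (m+1) → ℝ) + b • (Fin.snoc z' t' : Fin (m+1) → ℝ)
      = Fin.snoc (a • z + b • z') (a * t + b * t') := by
  funext i
  induction i using Fin.lastCases with
  | last => simp
  | cast j => simp

lemma snoc_inj {z z' : Fin m → ℝ} {t t' : ℝ} (h : (Fin.snoc z t : Fin (m+1) → ℝ) = Fin.snoc z' t') :
    z = z' ∧ t = t' := by
  constructor
  · funext j
    have := congrFun h (Fin.castSucc j)
    simpa using this
  · have := congrFun h (Fin.last m)
    simpa using this

/-- Embedding of a subset of `ℝ^m` into `ℝ^{m+1}` at height `t`. -/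
def emb (t : ℝ) (A : Set (Fin m → ℝ)) : Set (Fin (m + 1) → ℝ) :=
  (fun z => Fin.snoc z t) '' A

lemma continuous_snoc (t : ℝ) : Continuous (fun z : Fin m → ℝ => (Fin.snoc z t : Fin (m+1) → ℝ)) := by
  apply continuous_pi
  intro i
  induction i using Fin.lastCases with
  | last => simpa using continuous_const
  | cast j => simpa using continuous_apply j

lemma emb_compact {t : ℝ} {A : Set (Fin m → ℝ)} (hA : IsCompact A) : IsCompact (emb t A) :=
  hA.image (continuous_snoc t)

lemma emb_convex {t : ℝ} {A : Set (Fin m → ℝ)} (hA : Convex ℝ A) : Convex ℝ (emb t A) := by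
  rintro _ ⟨z, hz, rfl⟩ _ ⟨z', hz', rfl⟩ a b ha hb hab
  refine ⟨a • z + b • z', hA hz hz' ha hb hab, ?_⟩
  rw [snoc_comb]
  rw [← add_mul, hab, one_mul]

lemma emb_nonempty {t : ℝ} {A : Set (Fin m → ℝ)} (hA : A.Nonempty) : (emb t A).Nonempty :=
  hA.image _

section Join
variable {A B : Set (Fin m → ℝ)} {h : ℝ}

lemma mem_join_iff (hh : 0 < h) (x : Fin (m+1) → ℝ) :
    x ∈ convexJoin ℝ (emb 0 A) (emb h B) ↔
      ∃ b ∈ Icc (0:ℝ) 1, ∃ u ∈ A, ∃ v ∈ B, x = Fin.snoc ((1-b) • u + b • v) (b * h) := by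
  constructor
  · intro hx
    rw [mem_convexJoin] at hx
    obtain ⟨p, ⟨u, hu, rfl⟩, q, ⟨v, hv, rfl⟩, a, b, ha, hb, hab, rfl⟩ := hx
    refine ⟨b, ⟨hb, by linarith⟩, u, hu, v, hv, ?_⟩
    rw [snoc_comb, show a = 1 - b from by linarith]
    norm_num
  · rintro ⟨b, ⟨hb0, hb1⟩, u, hu, v, hv, rfl⟩
    rw [mem_convexJoin]
    refine ⟨_, ⟨u, hu, rfl⟩, _, ⟨v, hv, rfl⟩, 1 - b, b, by linarith, hb0, by ring, ?_⟩
    rw [snoc_comb]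
    congr 1
    ring

lemma join_slice (hh : 0 < h) {s : ℝ} (hs : s ∈ Icc 0 h) :
    {z : Fin m → ℝ | (Fin.snoc z s : Fin (m+1) → ℝ) ∈ convexJoin ℝ (emb 0 A) (emb h B)}
      = (1 - s/h) • A + (s/h) • B := by
  ext z
  simp only [mem_setOf_eq, mem_join_iff hh]
  constructor
  · rintro ⟨b, hb, u, hu, v, hv, hz⟩
    obtain ⟨hz1, hz2⟩ := snoc_inj hz
    have hbs : b = s / h := by field_simp [hh.ne']; linarith
    subst hbs hz1
    exact Set.add_mem_add (smul_mem_smul_set hu) (smul_mem_smul_set hv)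
  · rintro ⟨_, ⟨u, hu, rfl⟩, _, ⟨v, hv, rfl⟩, rfl⟩
    refine ⟨s / h, ⟨div_nonneg hs.1 hh.le, by rw [div_le_one hh]; exact hs.2⟩, u, hu, v, hv, ?_⟩
    congr 1
    field_simp

lemma join_slice_empty (hh : 0 < h) {s : ℝ} (hs : s ∉ Icc 0 h) :
    {z : Fin m → ℝ | (Fin.snoc z s : Fin (m+1) → ℝ) ∈ convexJoin ℝ (emb 0 A) (emb h B)} = ∅ := by
  ext z
  simp only [mem_setOf_eq, mem_join_iff hh, mem_empty_iff_false, iff_false]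
  rintro ⟨b, hb, u, hu, v, hv, hz⟩
  obtain ⟨-, hz2⟩ := snoc_inj hz
  exact hs ⟨by rw [hz2]; exact mul_nonneg hb.1 hh.le, by rw [hz2]; nlinarith [hb.1, hb.2, hh.le]⟩

end Join

/-- Fubini: volume of a measurable set in `ℝ^{m+1}` as integral of slice volumes. -/
lemma vol_eq_lintegral {S : Set (Fin (m+1) → ℝ)} (hS : MeasurableSet S) :
    volume S = ∫⁻ t : ℝ, volume {z : Fin m → ℝ | (Fin.snoc z t : Fin (m+1) → ℝ) ∈ S} := by
  have e := (volume_preserving_piFinSuccAbove (fun _ : Fin (m+1) => ℝ) (Fin.last m)).symm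
  rw [← e.measure_preimage hS.nullMeasurableSet]
  have : ((MeasurableEquiv.piFinSuccAbove (fun _ : Fin (m+1) => ℝ) (Fin.last m)).symm ⁻¹' S)
      = {p : ℝ × (Fin m → ℝ) | (Fin.snoc p.2 p.1 : Fin (m+1) → ℝ) ∈ S} := by
    ext p
    simp [MeasurableEquiv.piFinSuccAbove, Fin.insertNth_last', Fin.snocEquiv]
  rw [this]
  rw [show (volume : Measure (ℝ × (Fin m → ℝ))) = (volume : Measure ℝ).prod volume from rfl]
  rw [Measure.prod_apply]
  · rfl
  · have : Measurable fun p : ℝ × (Fin m → ℝ) => (Fin.snoc p.2 p.1 : Fin (m+1) → ℝ) := by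
      apply measurable_pi_lambda
      intro i
      induction i using Fin.lastCases with
      | last => simpa using measurable_fst
      | cast j => simpa using (show Measurable fun c : ℝ × (Fin m → ℝ) => c.2 j from (measurable_pi_apply j).comp measurable_snd)
    exact this hS

lemma vol_smul (r : ℝ) (A : Set (Fin m → ℝ)) :
    volume (r • A) = ENNReal.ofReal (|r| ^ m) * volume A := by
  rw [Measure.addHaar_smul, ← abs_pow, Module.finrank_fin_fun]

lemma vol_add_singleton (A : Set (Fin m → ℝ)) (v : Fin m → ℝ) :
    volume (A + {v}) = volume A := by
  rw [Set.add_singleton, image_add_right, measure_preimage_add_right]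

lemma vol_hyperplane :
    volume {x : Fin (m+1) → ℝ | x (Fin.last m) = 0} = 0 := by
  have hker : {x : Fin (m+1) → ℝ | x (Fin.last m) = 0}
      = (LinearMap.ker (LinearMap.proj (R := ℝ) (φ := fun _ : Fin (m+1) => ℝ) (Fin.last m)) :
          Set (Fin (m+1) → ℝ)) := by
    ext x; simp [LinearMap.mem_ker]
  rw [hker]
  apply Measure.addHaar_submodule
  intro htop
  have h1 : (Pi.single (Fin.last m) (1:ℝ)) ∈
      LinearMap.ker (LinearMap.proj (R := ℝ) (φ := fun _ : Fin (m+1) => ℝ) (Fin.last m)) := by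
    rw [htop]; trivial
  simp [LinearMap.mem_ker] at h1

lemma isCompact_convexJoin {E : Type*} [AddCommGroup E] [Module ℝ E] [TopologicalSpace E]
    [ContinuousSMul ℝ E] [ContinuousAdd E] {A B : Set E}
    (hA : IsCompact A) (hB : IsCompact B) : IsCompact (convexJoin ℝ A B) := by
  have himg : convexJoin ℝ A B
      = (fun q : ℝ × E × E => (1 - q.1) • q.2.1 + q.1 • q.2.2) '' (Icc (0:ℝ) 1 ×ˢ A ×ˢ B) := by
    ext x
    rw [mem_convexJoin]
    constructor
    · rintro ⟨a, ha, b, hb, hx⟩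
      rw [segment_eq_image ℝ a b] at hx
      obtain ⟨θ, hθ, rfl⟩ := hx
      exact ⟨(θ, a, b), ⟨hθ, ha, hb⟩, rfl⟩
    · rintro ⟨⟨θ, a, b⟩, ⟨hθ, ha, hb⟩, rfl⟩
      refine ⟨a, ha, b, hb, ?_⟩
      rw [segment_eq_image ℝ a b]
      exact ⟨θ, hθ, rfl⟩
  rw [himg]
  exact (isCompact_Icc.prod (hA.prod hB)).image (by fun_prop)

/-- volume polynomial of the frustum. -/
def Ppoly (m : ℕ) (h c : ℝ) : ℝ :=
  ∑ k ∈ Finset.range (m+1), ((c-1)/h)^k * (m.choose k : ℝ) * (h^(k+1)/((k:ℝ)+1))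

section KBody
variable {F : Set (Fin m → ℝ)} (hFcomp : IsCompact F) (hFconv : Convex ℝ F)
  (hFne : F.Nonempty) {c h : ℝ}

include hFcomp in
lemma K_compact : IsCompact (convexJoin ℝ (emb 0 F) (emb h (c • F))) :=
  isCompact_convexJoin (emb_compact hFcomp) (emb_compact (hFcomp.smul c))

include hFconv in
lemma K_convex : Convex ℝ (convexJoin ℝ (emb 0 F) (emb h (c • F))) :=
  (emb_convex hFconv).convexJoin (emb_convex (hFconv.smul c))

include hFconv hFne in
lemma K_hull_eq (hc : c ≠ 0) :
    convexHull ℝ (emb 0 F ∪ emb h (c • F)) = convexJoin ℝ (emb 0 F) (emb h (c • F)) :=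
  Convex.convexHull_union (emb_convex hFconv) (emb_convex (hFconv.smul c))
    (emb_nonempty hFne) (emb_nonempty hFne.smul_set)

include hFne in
lemma K_hasFloor (hh : 0 < h) :
    HasFloor m F (convexJoin ℝ (emb 0 F) (emb h (c • F))) := by
  constructor
  · intro x hx
    rw [mem_join_iff hh] at hx
    obtain ⟨b, hb, u, hu, v, hv, rfl⟩ := hx
    simp only [mem_setOf_eq, Fin.snoc_last]
    exact mul_nonneg hb.1 hh.le
  · ext x
    constructor
    · rintro ⟨hx, hx0⟩
      rw [mem_join_iff hh] at hx
      obtain ⟨b, hb, u, hu, v, hv, rfl⟩ := hx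
      simp only [mem_setOf_eq, Fin.snoc_last] at hx0
      have hb0 : b = 0 := by
        rcases mul_eq_zero.1 hx0 with h' | h'
        · exact h'
        · exact absurd h' hh.ne'
      subst hb0
      refine ⟨(1 - 0) • u + 0 • v, by simpa using hu, ?_⟩
      norm_num
    · rintro ⟨u, hu, rfl⟩
      obtain ⟨w, hw⟩ := hFne
      constructor
      · rw [mem_join_iff hh]
        refine ⟨0, ⟨le_refl _, zero_le_one⟩, u, hu, c • w, smul_mem_smul_set hw, ?_⟩
        norm_num
      · simp [mem_setOf_eq]

lemma K_heights (hh : 0 < h) {x : Fin (m+1) → ℝ}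
    (hx : x ∈ convexJoin ℝ (emb 0 F) (emb h (c • F))) :
    0 ≤ x (Fin.last m) ∧ x (Fin.last m) ≤ h := by
  rw [mem_join_iff hh] at hx
  obtain ⟨b, hb, u, hu, v, hv, rfl⟩ := hx
  simp only [Fin.snoc_last]
  constructor
  · exact mul_nonneg hb.1 hh.le
  · nlinarith [hb.1, hb.2, hh.le]

include hFconv in
lemma K_slice_vol (hFvol : volume F = 1) (hh : 0 < h) (hc : 1 ≤ c) {s : ℝ} (hs : s ∈ Icc 0 h) :
    volume {z : Fin m → ℝ | (Fin.snoc z s : Fin (m+1) → ℝ)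
        ∈ convexJoin ℝ (emb 0 F) (emb h (c • F))}
      = ENNReal.ofReal ((1 + s/h*(c-1))^m) := by
  have h01 : 0 ≤ s / h := div_nonneg hs.1 hh.le
  have h02 : s / h ≤ 1 := by rw [div_le_one hh]; exact hs.2
  have hr : 0 ≤ 1 - s/h + s/h*c := by nlinarith
  rw [join_slice hh hs, smul_smul, ← Convex.add_smul hFconv (by linarith) (by positivity),
    vol_smul, hFvol, mul_one]
  congr 1
  rw [abs_of_nonneg hr]
  ring_nf

include hFcomp hFconv in
lemma K_vol (hFvol : volume F = 1) (hh : 0 < h) (hc : 1 ≤ c) :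
    volume (convexJoin ℝ (emb 0 F) (emb h (c • F))) = ENNReal.ofReal (Ppoly m h c) := by
  rw [vol_eq_lintegral (K_compact hFcomp).isClosed.measurableSet]
  have hslice : ∀ s : ℝ,
      volume {z : Fin m → ℝ | (Fin.snoc z s : Fin (m+1) → ℝ)
          ∈ convexJoin ℝ (emb 0 F) (emb h (c • F))}
        = (Icc (0:ℝ) h).indicator (fun s => ENNReal.ofReal ((1 + s/h*(c-1))^m)) s := by
    intro s
    by_cases hs : s ∈ Icc (0:ℝ) h
    · rw [K_slice_vol hFconv hFvol hh hc hs, indicator_of_mem hs]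
    · rw [join_slice_empty hh hs, measure_empty, indicator_of_notMem hs]
  simp_rw [hslice]
  rw [lintegral_indicator measurableSet_Icc]
  have hg : Continuous (fun s : ℝ => (1 + s/h*(c-1))^m) := by fun_prop
  have hnn : 0 ≤ᵐ[volume.restrict (Icc (0:ℝ) h)] fun s : ℝ => (1 + s/h*(c-1))^m := by
    filter_upwards [self_mem_ae_restrict measurableSet_Icc] with s hs
    have h01 : 0 ≤ s / h := div_nonneg hs.1 hh.le
    have h02 : s / h ≤ 1 := by rw [div_le_one hh]; exact hs.2
    have : (0:ℝ) ≤ 1 + s/h*(c-1) := by nlinarith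
    positivity
  rw [← MeasureTheory.ofReal_integral_eq_lintegral_ofReal (hg.integrableOn_Icc) hnn]
  congr 1
  rw [MeasureTheory.integral_Icc_eq_integral_Ioc, ← intervalIntegral.integral_of_le hh.le]
  have hexp : ∀ s : ℝ, (1 + s/h*(c-1))^m
      = ∑ k ∈ Finset.range (m+1), (((c-1)/h)^k * (m.choose k : ℝ)) * s^k := by
    intro s
    rw [add_comm (1:ℝ), add_pow]
    apply Finset.sum_congr rfl
    intro k hk
    rw [one_pow, mul_one, show s/h*(c-1) = ((c-1)/h) * s by ring, mul_pow]
    ring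
  simp_rw [hexp]
  rw [intervalIntegral.integral_finset_sum
    (fun k _ => Continuous.intervalIntegrable (by fun_prop) _ _)]
  unfold Ppoly
  apply Finset.sum_congr rfl
  intro k hk
  rw [intervalIntegral.integral_const_mul, integral_pow, zero_pow (Nat.succ_ne_zero k),
    sub_zero]

lemma Ppoly_one (hh : 0 < h) : Ppoly m h 1 = h := by
  unfold Ppoly
  rw [Finset.sum_eq_single 0]
  · norm_num
  · intro k hk hk0
    rw [show ((1:ℝ)-1)/h = 0 by ring, zero_pow hk0]
    ring
  · intro habs
    exact absurd (Finset.mem_range.2 (Nat.succ_pos m)) habs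

lemma Ppoly_continuous (hh : 0 < h) : Continuous (fun c : ℝ => Ppoly m h c) := by
  unfold Ppoly
  apply continuous_finset_sum
  intro k hk
  fun_prop

lemma Ppoly_large (hm : 1 ≤ m) (hh : 0 < h) :
    1 ≤ Ppoly m h (1 + max 1 ((m+1)/h)) := by
  set M := max 1 ((m+1)/h) with hM
  have hM1 : (1:ℝ) ≤ M := le_max_left _ _
  have hM2 : (m+1)/h ≤ M := le_max_right _ _
  have hMh : (m:ℝ)+1 ≤ M * h := by
    rw [div_le_iff₀ hh] at hM2
    linarith
  have hMm : M ≤ M ^ m := le_self_pow₀ hM1 (by omega)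
  have hterm : 1 ≤ ((1 + M - 1)/h)^m * (m.choose m : ℝ) * (h^(m+1)/((m:ℝ)+1)) := by
    rw [Nat.choose_self]
    have hkey : ((1 + M - 1)/h)^m * (1:ℕ) * (h^(m+1)/((m:ℝ)+1)) = M^m * h / ((m:ℝ)+1) := by
      rw [show (1:ℝ) + M - 1 = M by ring, div_pow, pow_succ]
      push_cast
      field_simp
    rw [hkey, le_div_iff₀ (by positivity), one_mul]
    nlinarith [mul_le_mul_of_nonneg_right hMm hh.le]
  unfold Ppoly
  calc (1:ℝ) ≤ ((1 + M - 1)/h)^m * (m.choose m : ℝ) * (h^(m+1)/((m:ℝ)+1)) := hterm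
    _ ≤ ∑ k ∈ Finset.range (m+1), ((1 + M - 1)/h)^k * (m.choose k : ℝ) * (h^(k+1)/((k:ℝ)+1)) := by
        apply Finset.single_le_sum (f := fun k => ((1 + M - 1)/h)^k * (m.choose k : ℝ) * (h^(k+1)/((k:ℝ)+1)))
        · intro k hk
          have : (0:ℝ) ≤ (1 + M - 1)/h := by
            rw [show (1:ℝ) + M - 1 = M by ring]
            positivity
          positivity
        · exact Finset.self_mem_range_succ m

end KBody

section Main
variable {F : Set (Fin m → ℝ)} (hFcomp : IsCompact F) (hFconv : Convex ℝ F)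
  (hFne : F.Nonempty)

lemma floorEmb_eq : (fun z => Fin.snoc z (0:ℝ)) '' F = emb 0 F := rfl

include hFconv hFne in
lemma cone_eq_join (x : Fin (m+1) → ℝ) :
    convexHull ℝ ({x} ∪ (fun z => Fin.snoc z (0:ℝ)) '' F)
      = convexJoin ℝ (emb 0 F) {x} := by
  rw [floorEmb_eq, Convex.convexHull_union (convex_singleton x) (emb_convex hFconv)
    (singleton_nonempty x) (emb_nonempty hFne), convexJoin_comm]

include hFcomp hFconv hFne in
lemma cone_compact (x : Fin (m+1) → ℝ) :
    IsCompact (convexHull ℝ ({x} ∪ (fun z => Fin.snoc z (0:ℝ)) '' F)) := by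
  rw [cone_eq_join hFconv hFne]
  exact isCompact_convexJoin (emb_compact hFcomp) isCompact_singleton

include hFcomp hFconv hFne in
lemma cone_vol_le (hFvol : volume F = 1) {h : ℝ} (x : Fin (m+1) → ℝ)
    (hx0 : 0 ≤ x (Fin.last m)) (hxh : x (Fin.last m) ≤ h) :
    volume (convexHull ℝ ({x} ∪ (fun z => Fin.snoc z (0:ℝ)) '' F)) ≤ ENNReal.ofReal h := by
  set t := x (Fin.last m) with ht
  rcases eq_or_lt_of_le hx0 with h0 | h0
  · -- degenerate cone inside the hyperplane
    have hsub : convexHull ℝ ({x} ∪ (fun z => Fin.snoc z (0:ℝ)) '' F)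
        ⊆ {y : Fin (m+1) → ℝ | y (Fin.last m) = 0} := by
      apply convexHull_min
      · rintro y (rfl | ⟨z, hz, rfl⟩)
        · exact h0.symm
        · simp
      · exact convex_hyperplane (f := fun y : Fin (m+1) → ℝ => y (Fin.last m))
          ⟨fun a b => rfl, fun a b => by simp⟩ 0
    exact le_trans (le_trans (measure_mono hsub) (le_of_eq vol_hyperplane)) zero_le
  · -- proper cone, use slices
    have hx : x = Fin.snoc (Fin.init x) t := (Fin.snoc_init_self x).symm
    have hxe : ({x} : Set (Fin (m+1) → ℝ)) = emb t {Fin.init x} := by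
      rw [emb, Set.image_singleton, ← hx]
    rw [cone_eq_join hFconv hFne, hxe]
    have hcompact : IsCompact (convexJoin ℝ (emb 0 F) (emb t {Fin.init x})) := by
      rw [← hxe]
      exact isCompact_convexJoin (emb_compact hFcomp) isCompact_singleton
    rw [vol_eq_lintegral hcompact.isClosed.measurableSet]
    have hbound : ∀ s : ℝ,
        volume {z : Fin m → ℝ | (Fin.snoc z s : Fin (m+1) → ℝ)
            ∈ convexJoin ℝ (emb 0 F) (emb t {Fin.init x})}
          ≤ (Icc (0:ℝ) t).indicator (fun _ => 1) s := by
      intro s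
      by_cases hs : s ∈ Icc (0:ℝ) t
      · rw [join_slice h0 hs, indicator_of_mem hs]
        rw [smul_set_singleton, vol_add_singleton, vol_smul, hFvol, mul_one]
        apply ENNReal.ofReal_le_one.2
        have h1 : |1 - s / t| ≤ 1 := by
          rw [abs_le]
          constructor
          · have : s / t ≤ 1 := by rw [div_le_one h0]; exact hs.2
            linarith
          · have : 0 ≤ s / t := div_nonneg hs.1 h0.le
            linarith
        calc |1 - s / t| ^ m ≤ 1 ^ m := pow_le_pow_left₀ (abs_nonneg _) h1 m
          _ = 1 := one_pow m
      · rw [join_slice_empty h0 hs, indicator_of_notMem hs, measure_empty]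
    calc ∫⁻ s : ℝ, volume {z : Fin m → ℝ | (Fin.snoc z s : Fin (m+1) → ℝ)
            ∈ convexJoin ℝ (emb 0 F) (emb t {Fin.init x})}
        ≤ ∫⁻ s : ℝ, (Icc (0:ℝ) t).indicator (fun _ => 1) s := lintegral_mono hbound
      _ = volume (Icc (0:ℝ) t) := by
          rw [lintegral_indicator measurableSet_Icc]
          simp
      _ = ENNReal.ofReal (t - 0) := Real.volume_Icc
      _ ≤ ENNReal.ofReal h := ENNReal.ofReal_le_ofReal (by linarith)
include hFcomp hFconv hFne in
lemma mem_frontier_of_not_mem_cone {p q : Fin (m+1) → ℝ}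
    (hp : p ∉ convexHull ℝ ({q} ∪ floorEmb m F)) :
    p ∈ frontier (convexHull ℝ ({p, q} ∪ floorEmb m F)) := by
  have hCcomp : IsCompact (convexHull ℝ ({q} ∪ floorEmb m F)) := cone_compact hFcomp hFconv hFne q
  obtain ⟨f, u, hfC, hfp⟩ :=
    geometric_hahn_banach_closed_point (convex_convexHull ℝ _) hCcomp.isClosed hp
  have hqC : q ∈ convexHull ℝ ({q} ∪ floorEmb m F) :=
    subset_convexHull _ _ (mem_union_left _ rfl)
  have hfc : Convex ℝ (floorEmb m F) := emb_convex hFconv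
  have hfk : IsCompact (floorEmb m F) := emb_compact hFcomp
  have hfn : (floorEmb m F).Nonempty := hFne.image _
  have hHcomp : IsCompact (convexHull ℝ ({p, q} ∪ floorEmb m F)) := by
    rw [convexHull_union (insert_nonempty p {q}) hfn, convexHull_pair,
      hfc.convexHull_eq]
    apply isCompact_convexJoin ?_ hfk
    rw [segment_eq_image ℝ p q]
    exact isCompact_Icc.image (by fun_prop)
  have hHle : convexHull ℝ ({p, q} ∪ floorEmb m F) ⊆ {x | f x ≤ f p} := by
    apply convexHull_min ?_ (convex_halfSpace_le ⟨f.map_add, f.map_smul⟩ (f p))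
    rintro x (hx | hx)
    · simp only [mem_insert_iff, mem_singleton_iff] at hx
      rcases hx with rfl | rfl
      · exact mem_setOf_eq ▸ le_rfl
      · exact le_of_lt (lt_trans (hfC _ hqC) hfp)
    · exact le_of_lt (lt_trans (hfC x (subset_convexHull _ _ (mem_union_right _ hx))) hfp)
  have hpH : p ∈ convexHull ℝ ({p, q} ∪ floorEmb m F) :=
    subset_convexHull _ _ (mem_union_left _ (mem_insert _ _))
  have hpni : p ∉ interior (convexHull ℝ ({p, q} ∪ floorEmb m F)) := by
    intro hint
    have hv : 0 < f (p - q) := by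
      rw [map_sub]
      have := hfC q hqC
      linarith
    set w := (f (p - q))⁻¹ • (p - q) with hw
    have hfw : f w = 1 := by
      rw [hw, f.map_smul, smul_eq_mul, inv_mul_cancel₀ hv.ne']
    obtain ⟨ε, hε, hball⟩ := Metric.mem_nhds_iff.1 (mem_interior_iff_mem_nhds.1 hint)
    set δ := ε / (2 * (‖w‖ + 1)) with hδdef
    have hδ : 0 < δ := by positivity
    have hmem : p + δ • w ∈ Metric.ball p ε := by
      rw [Metric.mem_ball, dist_eq_norm, add_sub_cancel_left, norm_smul,
        Real.norm_eq_abs, abs_of_pos hδ]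
      have hwnn : 0 ≤ ‖w‖ := norm_nonneg w
      have h2 : δ * (‖w‖ + 1) = ε / 2 := by
        rw [hδdef]; field_simp
      nlinarith
    have := hHle (hball hmem)
    rw [mem_setOf_eq, map_add, f.map_smul, smul_eq_mul, hfw, mul_one] at this
    linarith
  rw [hHcomp.isClosed.frontier_eq]
  exact ⟨hpH, hpni⟩

/-- The "bad" set of pairs: `x ∈ K` and `y` in the cone over the floor with apex `x`. -/
def Rset (F : Set (Fin m → ℝ)) (K : Set (Fin (m+1) → ℝ)) :
    Set ((Fin (m+1) → ℝ) × (Fin (m+1) → ℝ)) :=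
  (fun q : ℝ × (Fin (m+1) → ℝ) × (Fin (m+1) → ℝ) =>
      (q.2.2, q.1 • q.2.2 + (1 - q.1) • q.2.1)) '' (Icc (0:ℝ) 1 ×ˢ floorEmb m F ×ˢ K)

include hFcomp in
lemma Rset_compact {K : Set (Fin (m+1) → ℝ)} (hK : IsCompact K) : IsCompact (Rset F K) :=
  ((isCompact_Icc.prod ((emb_compact hFcomp).prod hK)).image (by fun_prop))

include hFconv hFne in
lemma mem_Rset_iff {K : Set (Fin (m+1) → ℝ)} (x y : Fin (m+1) → ℝ) :
    (x, y) ∈ Rset F K ↔ x ∈ K ∧ y ∈ convexHull ℝ ({x} ∪ floorEmb m F) := by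
  have hfc : Convex ℝ (floorEmb m F) := emb_convex hFconv
  have hfn : (floorEmb m F).Nonempty := hFne.image _
  have hcone : convexHull ℝ ({x} ∪ floorEmb m F) = convexJoin ℝ {x} (floorEmb m F) :=
    Convex.convexHull_union (convex_singleton x) hfc (singleton_nonempty x) hfn
  constructor
  · rintro ⟨⟨a, w, x'⟩, ⟨ha, hw, hx'⟩, heq⟩
    simp only [Prod.mk.injEq] at heq
    obtain ⟨rfl, rfl⟩ := heq
    refine ⟨hx', ?_⟩
    rw [hcone, mem_convexJoin]
    exact ⟨x', rfl, w, hw, a, 1 - a, ha.1, by linarith [ha.2], by ring, rfl⟩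
  · rintro ⟨hxK, hy⟩
    rw [hcone, mem_convexJoin] at hy
    obtain ⟨x', hx', w, hw, a, b, ha, hb, hab, hy⟩ := hy
    obtain rfl : x' = x := hx'
    refine ⟨(a, w, x'), ⟨⟨ha, by linarith⟩, hw, hxK⟩, ?_⟩
    simp only [Prod.mk.injEq]
    refine ⟨trivial, ?_⟩
    rw [← hy, show (1:ℝ) - a = b by linarith]

end Main

/-- For every `α > 0` there is a compact convex `K` with floor `F` and volume `1`
such that `Q_K(2) ≥ 1 - α`. -/
theorem stmt5 (m : ℕ) (hm : 1 ≤ m) (F : Set (Fin m → ℝ))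
    (hFcomp : IsCompact F) (hFconv : Convex ℝ F) (hFvol : volume F = 1)
    (α : ℝ) (hα : 0 < α) :
    ∃ K : Set (Fin (m + 1) → ℝ), IsCompact K ∧ Convex ℝ K ∧ HasFloor m F K ∧
      volume K = 1 ∧ 1 - α ≤ Qtwo m F K := by
  have hFne : F.Nonempty := by
    rcases eq_empty_or_nonempty F with rfl | hne
    · rw [measure_empty] at hFvol; exact absurd hFvol zero_ne_one
    · exact hne
  set h : ℝ := min (1/2) (α/2) with hhdef
  have hh : 0 < h := lt_min (by norm_num) (by linarith)
  have hh1 : h ≤ 1/2 := min_le_left _ _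
  have hhα : 2 * h ≤ α := by
    have := min_le_right (1/2:ℝ) (α/2); linarith
  set c₀ : ℝ := 1 + max 1 ((m+1)/h) with hc₀def
  have hc₀ : (1:ℝ) ≤ c₀ := by
    rw [hc₀def]
    have : (1:ℝ) ≤ max 1 ((m+1)/h) := le_max_left _ _
    linarith
  have h1mem : (1:ℝ) ∈ Icc (Ppoly m h 1) (Ppoly m h c₀) := by
    rw [Ppoly_one hh]
    exact ⟨by linarith, Ppoly_large hm hh⟩
  obtain ⟨c, hcmem, hPc0⟩ := intermediate_value_Icc hc₀ ((Ppoly_continuous hh).continuousOn) h1mem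
  have hPc : Ppoly m h c = 1 := hPc0
  have hc1 : (1:ℝ) ≤ c := hcmem.1
  set K : Set (Fin (m+1) → ℝ) := convexJoin ℝ (emb 0 F) (emb h (c • F)) with hKdef
  have hKcomp : IsCompact K := K_compact hFcomp
  have hKmeas : MeasurableSet K := hKcomp.isClosed.measurableSet
  have hKvol : volume K = 1 := by
    rw [hKdef, K_vol hFcomp hFconv hFvol hh hc1, hPc, ENNReal.ofReal_one]
  refine ⟨K, hKcomp, K_convex hFconv, K_hasFloor hFne hh, hKvol, ?_⟩
  set ρ := volume.restrict K with hρ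
  have hρuniv : ρ univ = 1 := by rw [hρ, Measure.restrict_apply_univ, hKvol]
  set μ := ρ.prod ρ with hμ
  set R := Rset F K with hR
  have hRmeas : MeasurableSet R := (Rset_compact hFcomp hKcomp).isClosed.measurableSet
  have hslice : ∀ x : Fin (m+1) → ℝ, ρ (Prod.mk x ⁻¹' R) ≤ ENNReal.ofReal h := by
    intro x
    by_cases hxK : x ∈ K
    · have hsub : Prod.mk x ⁻¹' R ⊆ convexHull ℝ ({x} ∪ floorEmb m F) := by
        intro y hy
        exact ((mem_Rset_iff hFconv hFne x y).1 hy).2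
      calc ρ (Prod.mk x ⁻¹' R) ≤ volume (Prod.mk x ⁻¹' R) := by
            rw [hρ, Measure.restrict_apply' hKmeas]
            exact measure_mono inter_subset_left
        _ ≤ volume (convexHull ℝ ({x} ∪ floorEmb m F)) := measure_mono hsub
        _ ≤ ENNReal.ofReal h := by
            obtain ⟨hx0, hxh⟩ := K_heights hh hxK
            exact cone_vol_le hFcomp hFconv hFne hFvol x hx0 hxh
    · have hemp : Prod.mk x ⁻¹' R = ∅ := by
        ext y
        simp only [mem_preimage, mem_empty_iff_false, iff_false]
        intro hy
        exact hxK ((mem_Rset_iff hFconv hFne x y).1 hy).1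
      rw [hemp, measure_empty]
      exact zero_le
  have hμR : μ R ≤ ENNReal.ofReal h := by
    rw [hμ, Measure.prod_apply hRmeas]
    calc ∫⁻ x, ρ (Prod.mk x ⁻¹' R) ∂ρ ≤ ∫⁻ _, ENNReal.ofReal h ∂ρ := lintegral_mono hslice
      _ = ENNReal.ofReal h * ρ univ := lintegral_const _
      _ = ENNReal.ofReal h := by rw [hρuniv, mul_one]
  have hμR' : μ (Prod.swap ⁻¹' R) ≤ ENNReal.ofReal h := by
    have hswap : Measure.map Prod.swap μ = μ := by rw [hμ, Measure.prod_swap]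
    calc μ (Prod.swap ⁻¹' R) = (Measure.map Prod.swap μ) R :=
          (Measure.map_apply measurable_swap hRmeas).symm
      _ = μ R := by rw [hswap]
      _ ≤ _ := hμR
  set S := {p : (Fin (m+1) → ℝ) × (Fin (m+1) → ℝ) |
      p.1 ∈ frontier (convexHull ℝ ({p.1, p.2} ∪ floorEmb m F)) ∧
      p.2 ∈ frontier (convexHull ℝ ({p.1, p.2} ∪ floorEmb m F))} with hS
  have hGsub : (K ×ˢ K) \ (R ∪ Prod.swap ⁻¹' R) ⊆ S := by
    rintro ⟨x, y⟩ ⟨⟨hxK, hyK⟩, hbad⟩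
    simp only [mem_union, not_or, mem_preimage, Prod.swap_prod_mk] at hbad
    obtain ⟨hb1, hb2⟩ := hbad
    have hyc : y ∉ convexHull ℝ ({x} ∪ floorEmb m F) := fun hcc =>
      hb1 ((mem_Rset_iff hFconv hFne x y).2 ⟨hxK, hcc⟩)
    have hxc : x ∉ convexHull ℝ ({y} ∪ floorEmb m F) := fun hcc =>
      hb2 ((mem_Rset_iff hFconv hFne y x).2 ⟨hyK, hcc⟩)
    constructor
    · exact mem_frontier_of_not_mem_cone hFcomp hFconv hFne hxc
    · have := mem_frontier_of_not_mem_cone hFcomp hFconv hFne hyc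
      rwa [pair_comm y x] at this
  have hμKK : μ (K ×ˢ K) = 1 := by
    rw [hμ, Measure.prod_prod, hρ, Measure.restrict_apply_self, hKvol, mul_one]
  have hμS : 1 - ENNReal.ofReal (2*h) ≤ μ S := by
    have h2 : μ (R ∪ Prod.swap ⁻¹' R) ≤ ENNReal.ofReal (2*h) := by
      calc μ (R ∪ Prod.swap ⁻¹' R) ≤ μ R + μ (Prod.swap ⁻¹' R) := measure_union_le _ _
        _ ≤ ENNReal.ofReal h + ENNReal.ofReal h := add_le_add hμR hμR'
        _ = ENNReal.ofReal (2*h) := by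
            rw [← ENNReal.ofReal_add hh.le hh.le]; norm_num [two_mul]
    calc 1 - ENNReal.ofReal (2*h) ≤ μ (K ×ˢ K) - μ (R ∪ Prod.swap ⁻¹' R) := by
          rw [hμKK]; exact tsub_le_tsub le_rfl h2
      _ ≤ μ ((K ×ˢ K) \ (R ∪ Prod.swap ⁻¹' R)) := le_measure_diff
      _ ≤ μ S := measure_mono hGsub
  have huniv : μ univ = 1 := by
    rw [hμ, ← univ_prod_univ, Measure.prod_prod, hρuniv, mul_one]
  rcases le_or_gt (1:ℝ) α with hα1 | hα1
  · have h0 : (0:ℝ) ≤ Qtwo m F K := ENNReal.toReal_nonneg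
    linarith
  · have hkey : ENNReal.ofReal (1 - α) ≤ μ S := by
      refine le_trans ?_ hμS
      apply ENNReal.le_sub_of_add_le_right ENNReal.ofReal_ne_top
      rw [← ENNReal.ofReal_add (by linarith) (by linarith), ← ENNReal.ofReal_one]
      exact ENNReal.ofReal_le_ofReal (by linarith)
    have hfin : μ S ≠ ⊤ :=
      ne_top_of_le_ne_top (by rw [huniv]; exact ENNReal.one_ne_top)
        (measure_mono (subset_univ _))
    have hmono := ENNReal.toReal_mono hfin hkey
    rw [ENNReal.toReal_ofReal (by linarith)] at hmono
    unfold Qtwo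
    rw [← hρ, ← hμ]
    exact hmono

end
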